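/- Let X be a topological space and let k be a positive integer. If X is selectively k-star-ccc, then X is k-star-Lindelöf. (In particular, every selectively star-ccc space is star-Lindelöf.) -/
import Mathlib


open Set

namespace SelStar

variable {X : Type*}

/-- The star of a set `A` with respect to a family `𝒰`:
`st(A,𝒰) = ⋃ {U ∈ 𝒰 : U ∩ A ≠ ∅}`. -/
def st (𝒰 : Set (Set X)) (A : Set X) : Set X :=
  ⋃₀ {u ∈ 𝒰 | (u ∩ A).Nonempty}

/-- Iterated star: `stIter 𝒰 A n = st^n(A,𝒰)`, with `st^0(A,𝒰) = A`. -/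
def stIter (𝒰 : Set (Set X)) (A : Set X) : ℕ → Set X
  | 0 => A
  | n + 1 => st 𝒰 (stIter 𝒰 A n)

/-- `𝒰` is an open cover of `X`. -/
def IsOpenCover [TopologicalSpace X] (𝒰 : Set (Set X)) : Prop :=
  (∀ u ∈ 𝒰, IsOpen u) ∧ ⋃₀ 𝒰 = univ

/-- A cellular family: a family of nonempty pairwise disjoint open sets. -/
def Cellular [TopologicalSpace X] (𝒜 : Set (Set X)) : Prop :=
  (∀ A ∈ 𝒜, IsOpen A ∧ A.Nonempty) ∧ 𝒜.Pairwise Disjoint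

/-- A maximal cellular family: a cellular family not properly contained in
any other cellular family. -/
def MaximalCellular [TopologicalSpace X] (𝒜 : Set (Set X)) : Prop :=
  Cellular 𝒜 ∧ ∀ ℬ : Set (Set X), Cellular ℬ → 𝒜 ⊆ ℬ → ℬ = 𝒜

/-- `X` is selectively `k`-star-ccc. -/
def SelectivelyKStarCCC (X : Type*) [TopologicalSpace X] (k : ℕ) : Prop :=
  ∀ 𝒰 : Set (Set X), IsOpenCover 𝒰 →
    ∀ 𝒜 : ℕ → Set (Set X), (∀ n, MaximalCellular (𝒜 n)) →
      ∃ A : ℕ → Set X, (∀ n, A n ∈ 𝒜 n) ∧ stIter 𝒰 (⋃ n, A n) k = univ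

/-- `X` is `k`-star-Lindelöf. -/
def KStarLindelof (X : Type*) [TopologicalSpace X] (k : ℕ) : Prop :=
  ∀ 𝒰 : Set (Set X), IsOpenCover 𝒰 →
    ∃ 𝒱 ⊆ 𝒰, 𝒱.Countable ∧ stIter 𝒰 (⋃₀ 𝒱) k = univ

/-- The countable chain condition: every cellular family is countable. -/
def CCC (X : Type*) [TopologicalSpace X] : Prop :=
  ∀ 𝒜 : Set (Set X), Cellular 𝒜 → 𝒜.Countable

/-- `X` is weakly Lindelöf. -/
def WeaklyLindelof (X : Type*) [TopologicalSpace X] : Prop :=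
  ∀ 𝒰 : Set (Set X), IsOpenCover 𝒰 →
    ∃ 𝒱 ⊆ 𝒰, 𝒱.Countable ∧ Dense (⋃₀ 𝒱)

/-- `X` is `ω`-star-Lindelöf. -/
def OmegaStarLindelof (X : Type*) [TopologicalSpace X] : Prop :=
  ∀ 𝒰 : Set (Set X), IsOpenCover 𝒰 →
    ∃ k : ℕ, 0 < k ∧ ∃ 𝒱 ⊆ 𝒰, 𝒱.Countable ∧ stIter 𝒰 (⋃₀ 𝒱) k = univ

/-- `X` is selectively `ω`-star-ccc. -/
def SelectivelyOmegaStarCCC (X : Type*) [TopologicalSpace X] : Prop :=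
  ∀ 𝒰 : Set (Set X), IsOpenCover 𝒰 →
    ∀ 𝒜 : ℕ → Set (Set X), (∀ n, MaximalCellular (𝒜 n)) →
      ∃ A : ℕ → Set X, (∀ n, A n ∈ 𝒜 n) ∧
        ∃ k : ℕ, 0 < k ∧ stIter 𝒰 (⋃ n, A n) k = univ

/-- A discrete family: every point has a neighborhood meeting at most one member. -/
def DiscreteFamily (X : Type*) [TopologicalSpace X] (𝒜 : Set (Set X)) : Prop :=
  ∀ x : X, ∃ N ∈ nhds x, {A ∈ 𝒜 | (A ∩ N).Nonempty}.Subsingleton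

/-- The discrete countable chain condition: every discrete family of nonempty
open sets is countable. -/
def DCCC (X : Type*) [TopologicalSpace X] : Prop :=
  ∀ 𝒜 : Set (Set X), (∀ A ∈ 𝒜, IsOpen A ∧ A.Nonempty) →
    DiscreteFamily X 𝒜 → 𝒜.Countable

/-- `X` is weakly strongly star-Lindelöf (weakly star countable). -/
def WeaklySSL (X : Type*) [TopologicalSpace X] : Prop :=
  ∀ 𝒰 : Set (Set X), IsOpenCover 𝒰 →
    ∃ A : Set X, A.Countable ∧ Dense (st 𝒰 A)

/-- `X` is strongly `1`-star-Lindelöf (SSL). -/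
def SSL (X : Type*) [TopologicalSpace X] : Prop :=
  ∀ 𝒰 : Set (Set X), IsOpenCover 𝒰 →
    ∃ A : Set X, A.Countable ∧ st 𝒰 A = univ

/-- `X` is selectively ccc. -/
def SelectivelyCCC (X : Type*) [TopologicalSpace X] : Prop :=
  ∀ 𝒜 : ℕ → Set (Set X), (∀ n, MaximalCellular (𝒜 n)) →
    ∃ A : ℕ → Set X, (∀ n, A n ∈ 𝒜 n) ∧ Dense (⋃ n, A n)

/-- `X` is countably compact: every countable open cover has a finite subcover. -/
def CountablyCompact (X : Type*) [TopologicalSpace X] : Prop :=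
  ∀ 𝒰 : Set (Set X), 𝒰.Countable → IsOpenCover 𝒰 →
    ∃ ℱ ⊆ 𝒰, ℱ.Finite ∧ ⋃₀ ℱ = univ

end SelStar

open SelStar


lemma st_mono {X : Type*} {𝒰 : Set (Set X)} {A B : Set X} (hAB : A ⊆ B) :
    st 𝒰 A ⊆ st 𝒰 B := by
  apply Set.sUnion_subset_sUnion
  rintro u ⟨hu, x, hx1, hx2⟩
  exact ⟨hu, x, hx1, hAB hx2⟩

lemma stIter_mono {X : Type*} {𝒰 : Set (Set X)} {A B : Set X} (hAB : A ⊆ B) :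
    ∀ n, stIter 𝒰 A n ⊆ stIter 𝒰 B n
  | 0 => hAB
  | n + 1 => st_mono (stIter_mono hAB n)

lemma exists_maximal_refining {X : Type*} [TopologicalSpace X] {𝒰 : Set (Set X)}
    (h𝒰 : IsOpenCover 𝒰) :
    ∃ 𝒜 : Set (Set X), MaximalCellular 𝒜 ∧ ∀ A ∈ 𝒜, ∃ U ∈ 𝒰, A ⊆ U := by
  obtain ⟨𝒜, ⟨⟨h𝒜c, h𝒜r⟩, h𝒜sub⟩, h𝒜max⟩ :=
    zorn_subset {𝒜 : Set (Set X) | Cellular 𝒜 ∧ ∀ A ∈ 𝒜, ∃ U ∈ 𝒰, A ⊆ U}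
      (fun c hc hchain => by
        refine ⟨⋃₀ c, ⟨⟨?_, ?_⟩, ?_⟩, fun s hs => Set.subset_sUnion_of_mem hs⟩
        · rintro A ⟨s, hs, hAs⟩
          exact (hc hs).1.1 A hAs
        · rintro A ⟨s, hs, hAs⟩ B ⟨t, ht, hBt⟩ hAB
          rcases hchain.total hs ht with hst | hts
          · exact (hc ht).1.2 (hst hAs) hBt hAB
          · exact (hc hs).1.2 hAs (hts hBt) hAB
        · rintro A ⟨s, hs, hAs⟩
          exact (hc hs).2 A hAs)
  · refine ⟨𝒜, ⟨⟨h𝒜c, h𝒜r⟩, ?_⟩, h𝒜sub⟩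
    intro ℬ hℬ h𝒜ℬ
    by_contra hne
    have : ∃ B ∈ ℬ, B ∉ 𝒜 := by
      by_contra hall
      push_neg at hall
      exact hne (Set.Subset.antisymm hall h𝒜ℬ)
    obtain ⟨B, hBℬ, hB𝒜⟩ := this
    obtain ⟨hBopen, x, hxB⟩ := hℬ.1 B hBℬ
    have hxU : x ∈ ⋃₀ 𝒰 := h𝒰.2 ▸ Set.mem_univ x
    obtain ⟨U, hU𝒰, hxU⟩ := hxU
    -- B ∩ U is disjoint from every member of 𝒜
    have hdisj : ∀ A ∈ 𝒜, Disjoint A (B ∩ U) := by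
      intro A hA
      have hAB : A ≠ B := fun hEq => hB𝒜 (hEq ▸ hA)
      exact ((hℬ.2 (h𝒜ℬ hA) hBℬ hAB).mono_right Set.inter_subset_left)
    have hBUne : (B ∩ U).Nonempty := ⟨x, hxB, hxU⟩
    have hBU : B ∩ U ∉ 𝒜 := by
      intro hmem
      have := (hdisj _ hmem).eq_bot_of_le le_rfl
      rw [this] at hBUne
      exact Set.not_nonempty_empty hBUne
    have hbig : insert (B ∩ U) 𝒜 ∈
        {𝒜 : Set (Set X) | Cellular 𝒜 ∧ ∀ A ∈ 𝒜, ∃ U ∈ 𝒰, A ⊆ U} := by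
      refine ⟨⟨?_, ?_⟩, ?_⟩
      · rintro A (rfl | hA)
        · exact ⟨hBopen.inter (h𝒰.1 U hU𝒰), x, hxB, hxU⟩
        · exact h𝒜c A hA
      · rw [Set.pairwise_insert]
        refine ⟨h𝒜r, fun A hA _ => ⟨(hdisj A hA).symm, hdisj A hA⟩⟩
      · rintro A (rfl | hA)
        · exact ⟨U, hU𝒰, Set.inter_subset_right⟩
        · exact h𝒜sub A hA
    exact hBU (h𝒜max hbig (Set.subset_insert _ _) (Set.mem_insert _ _))

/-- Every selectively `k`-star-ccc space is `k`-star-Lindelöf. -/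
theorem selectively_k_star_ccc_implies_k_star_Lindelof
    (X : Type*) [TopologicalSpace X] (k : ℕ) (hk : 0 < k)
    (h : SelectivelyKStarCCC X k) : KStarLindelof X k := by
  intro 𝒰 h𝒰
  obtain ⟨𝒜, h𝒜max, h𝒜ref⟩ := exists_maximal_refining h𝒰
  obtain ⟨A, hA, hst⟩ := h 𝒰 h𝒰 (fun _ => 𝒜) (fun _ => h𝒜max)
  choose U hU𝒰 hAU using fun n => h𝒜ref (A n) (hA n)
  refine ⟨Set.range U, Set.range_subset_iff.mpr hU𝒰, Set.countable_range U, ?_⟩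
  apply Set.eq_univ_of_univ_subset
  rw [← hst]
  apply stIter_mono
  exact Set.iUnion_subset fun n => (hAU n).trans
    (Set.subset_sUnion_of_mem ⟨n, rfl⟩)
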